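/- Let f_i(x) = a_i x + b_i for i = 1, ..., n be affine maps of ℝ with real coefficients satisfying a_i > 1 for all i, and set s_i = b_i / (1 - a_i). If s_1 < s_2 < ... < s_n and (s_n - b_i)/a_i ≤ (s_1 - b_{i+1})/a_{i+1} for all i = 1, ..., n-1, then the semigroup generated by f_1, ..., f_n is free of rank n with free basis f_1, ..., f_n. -/

import Mathlib

/-- **Theorem 1.** Let `f i x = a i * x + b i` with `a i > 1` for all `i`, and
`s i = b i / (1 - a i)`. If `s 1 < s 2 < … < s n` and
`(s n - b i) / a i ≤ (s 1 - b (i+1)) / a (i+1)` for `i = 1, …, n-1`,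
then the semigroup generated by `f 1, …, f n` is free of rank `n` with free basis
`f 1, …, f n`. -/
theorem free_semigroup_of_affine_maps_of_separated_intervals
    (n : ℕ) (a b s : Fin n → ℝ) (f : Fin n → ℝ → ℝ)
    (ha : ∀ i, 1 < a i)
    (hf : ∀ i, f i = fun x => a i * x + b i)
    (hs : ∀ i, s i = b i / (1 - a i))
    (hmono : ∀ i j : Fin n, i < j → s i < s j)
    (hsep : ∀ i : Fin n, ∀ hi : (i : ℕ) + 1 < n,
      (s ⟨n - 1, by omega⟩ - b i) / a i ≤
        (s ⟨0, by omega⟩ - b ⟨(i : ℕ) + 1, hi⟩) / a ⟨(i : ℕ) + 1, hi⟩) :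
    ∀ w₁ w₂ : List (Fin n),
      (w₁.map f).foldr (· ∘ ·) id = (w₂.map f).foldr (· ∘ ·) id → w₁ = w₂ := by
  set F : List (Fin n) → ℝ → ℝ := fun w => (w.map f).foldr (· ∘ ·) id with hF
  have hFnil : F [] = id := rfl
  have hFcons : ∀ (i : Fin n) w, F (i :: w) = f i ∘ F w := fun i w => rfl
  have hFappend : ∀ u v, F (u ++ v) = F u ∘ F v := by
    intro u v
    induction u with
    | nil => rfl
    | cons i u ih =>
      show F (i :: (u ++ v)) = F (i :: u) ∘ F v
      rw [hFcons, ih, hFcons]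
      rfl
  have hapos : ∀ i, (0:ℝ) < a i := fun i => lt_trans one_pos (ha i)
  -- every composition is affine with slope ≥ 1, and > 1 if the word is nonempty
  have slope : ∀ w : List (Fin n), ∃ A B : ℝ,
      (∀ x, F w x = A * x + B) ∧ 1 ≤ A ∧ (w ≠ [] → 1 < A) := by
    intro w
    induction w with
    | nil => exact ⟨1, 0, by simp [hFnil], le_refl 1, by simp⟩
    | cons i w ih =>
      obtain ⟨A, B, hAB, hA1, _⟩ := ih
      refine ⟨a i * A, a i * B + b i, ?_, ?_, fun _ => ?_⟩
      · intro x
        rw [hFcons]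
        simp only [Function.comp_apply, hAB, hf]
        ring
      · nlinarith [ha i, hapos i]
      · nlinarith [ha i, hapos i]
  have inj : ∀ w, Function.Injective (F w) := by
    intro w x y hxy
    obtain ⟨A, B, hAB, hA1, _⟩ := slope w
    rw [hAB, hAB] at hxy
    nlinarith
  -- a nonempty word cannot represent the identity
  have notid : ∀ (w : List (Fin n)), w ≠ [] → F w ≠ id := by
    intro w hw hid
    obtain ⟨A, B, hAB, _, hA⟩ := slope w
    have h0 := hAB 0
    have h1 := hAB 1
    rw [hid] at h0 h1
    simp at h0 h1
    have := hA hw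
    nlinarith
  intro w₁ w₂
  rcases Nat.eq_zero_or_pos n with hn | hn
  · subst hn
    have hnil : ∀ w : List (Fin 0), w = [] := by
      intro w
      cases w with
      | nil => rfl
      | cons i _ => exact absurd i.2 (by omega)
    intro _
    rw [hnil w₁, hnil w₂]
  -- now n > 0
  set lo := s ⟨0, hn⟩ with hlo
  set hi := s ⟨n - 1, by omega⟩ with hhi
  have hle : ∀ i : Fin n, lo ≤ s i ∧ s i ≤ hi := by
    intro i
    constructor
    · rcases Nat.eq_zero_or_pos i.val with h | h
      · have hi0 : i = ⟨0, hn⟩ := Fin.ext h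
        rw [hlo, hi0]
      · exact le_of_lt (hmono ⟨0, hn⟩ i h)
    · rcases Nat.lt_or_ge i.val (n - 1) with h | h
      · exact le_of_lt (hmono i ⟨n - 1, by omega⟩ h)
      · have hi2 := i.2
        have hin : i = (⟨n - 1, by omega⟩ : Fin n) := Fin.ext (show i.val = n - 1 by omega)
        rw [hhi, hin]
  -- the inverse maps g i preserve [lo, hi]
  have ginv : ∀ (i : Fin n) (t : ℝ), lo ≤ t → t ≤ hi →
      lo ≤ (t - b i) / a i ∧ (t - b i) / a i ≤ hi := by
    intro i t h1 h2
    have hsi := hs i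
    have hane : (1:ℝ) - a i ≠ 0 := by nlinarith [ha i]
    have hbi : b i = s i * (1 - a i) := by
      field_simp at hsi
      linarith [hsi]
    obtain ⟨hl, hr⟩ := hle i
    constructor
    · rw [le_div_iff₀ (hapos i)]
      nlinarith [ha i]
    · rw [div_le_iff₀ (hapos i)]
      nlinarith [ha i]
  -- separation chain: i < j implies g i hi ≤ g j lo
  have chainN : ∀ (k : ℕ) (i : Fin n) (hk : i.val + k + 1 < n),
      (hi - b i) / a i ≤ (lo - b ⟨i.val + k + 1, hk⟩) / a ⟨i.val + k + 1, hk⟩ := by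
    intro k
    induction k with
    | zero => intro i hk; exact hsep i hk
    | succ k ih =>
      intro i hk
      have hk' : i.val + k + 1 < n := by omega
      set m : Fin n := ⟨i.val + k + 1, hk'⟩ with hm
      have h1 := ih i hk'
      have h2 : (lo - b m) / a m ≤ (hi - b m) / a m := by
        have hlohi : lo ≤ hi := le_trans (hle i).1 (hle i).2
        exact (div_le_div_iff_of_pos_right (hapos m)).mpr (by linarith)
      have h3 := hsep m (show i.val + k + 1 + 1 < n by omega)
      exact le_trans h1 (le_trans h2 h3)
  have chain : ∀ (i j : Fin n), i < j → (hi - b i) / a i ≤ (lo - b j) / a j := by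
    intro i j hij
    have hij' : i.val < j.val := hij
    have hk : i.val + (j.val - i.val - 1) + 1 < n := by omega
    have hjj : (⟨i.val + (j.val - i.val - 1) + 1, hk⟩ : Fin n) = j :=
      Fin.ext (show i.val + (j.val - i.val - 1) + 1 = j.val by omega)
    have := chainN (j.val - i.val - 1) i hk
    rwa [hjj] at this
  -- preimages of points of [lo, hi] stay in [lo, hi]
  have preim : ∀ (w : List (Fin n)) (y : ℝ), lo ≤ y → y ≤ hi →
      ∃ x, lo ≤ x ∧ x ≤ hi ∧ F w x = y := by
    intro w
    induction w with
    | nil => intro y h1 h2; exact ⟨y, h1, h2, rfl⟩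
    | cons i w ih =>
      intro y h1 h2
      obtain ⟨hg1, hg2⟩ := ginv i y h1 h2
      obtain ⟨x, hx1, hx2, hx3⟩ := ih ((y - b i) / a i) hg1 hg2
      refine ⟨x, hx1, hx2, ?_⟩
      rw [hFcons]
      simp only [Function.comp_apply, hx3, hf]
      have hne : a i ≠ 0 := (hapos i).ne'
      field_simp
      ring
  -- key ping-pong claim: distinct last letters are impossible
  have claim : ∀ (i j : Fin n) (u v : List (Fin n)), i < j →
      F (u ++ [i]) = F (v ++ [j]) → False := by
    intro i j u v hij heq
    have hlohi : lo < hi := by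
      have h1 : lo ≤ s i := (hle i).1
      have h2 : s j ≤ hi := (hle j).2
      have h3 : s i < s j := hmono i j hij
      linarith
    have key : ∀ y : ℝ, lo ≤ y → y ≤ hi →
        ∃ x, F (u ++ [i]) x = y ∧ x = (lo - b j) / a j := by
      intro y hy1 hy2
      obtain ⟨z, hz1, hz2, hz3⟩ := preim u y hy1 hy2
      set x := (z - b i) / a i with hx
      have hfix : f i x = z := by
        have hne : a i ≠ 0 := (hapos i).ne'
        rw [hf]; simp only [hx]; field_simp; ring
      have hFx : F (u ++ [i]) x = y := by
        rw [hFappend]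
        simp only [Function.comp_apply]
        have : F [i] x = f i x := rfl
        rw [this, hfix, hz3]
      obtain ⟨z', hz1', hz2', hz3'⟩ := preim v y hy1 hy2
      set x' := (z' - b j) / a j with hx'
      have hfix' : f j x' = z' := by
        have hne : a j ≠ 0 := (hapos j).ne'
        rw [hf]; simp only [hx']; field_simp; ring
      have hFx' : F (v ++ [j]) x' = y := by
        rw [hFappend]
        simp only [Function.comp_apply]
        have : F [j] x' = f j x' := rfl
        rw [this, hfix', hz3']
      have hxx' : x = x' := by
        apply inj (u ++ [i])
        rw [hFx, heq, hFx']
      -- x ≤ g i hi ≤ g j lo ≤ x' = x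
      have hub : x ≤ (hi - b i) / a i :=
        (div_le_div_iff_of_pos_right (hapos i)).mpr (by linarith)
      have hlb : (lo - b j) / a j ≤ x' :=
        (div_le_div_iff_of_pos_right (hapos j)).mpr (by linarith)
      have hch := chain i j hij
      refine ⟨x, hFx, le_antisymm ?_ ?_⟩
      · rw [hxx']; linarith
      · linarith [hxx' ▸ hlb]
    obtain ⟨x, hx1, hx2⟩ := key lo le_rfl (le_of_lt hlohi)
    obtain ⟨y, hy1, hy2⟩ := key hi (le_of_lt hlohi) le_rfl
    have : x = y := by rw [hx2, hy2]
    rw [this, hy1] at hx1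
    exact absurd hx1 (ne_of_gt hlohi)
  -- main induction on total length
  have main : ∀ (N : ℕ) (w₁ w₂ : List (Fin n)),
      w₁.length + w₂.length ≤ N → F w₁ = F w₂ → w₁ = w₂ := by
    intro N
    induction N with
    | zero =>
      intro w₁ w₂ hlen _
      have h1 : w₁ = [] := List.length_eq_zero_iff.mp (by omega)
      have h2 : w₂ = [] := List.length_eq_zero_iff.mp (by omega)
      rw [h1, h2]
    | succ N ih =>
      intro w₁ w₂ hlen heq
      rcases w₁.eq_nil_or_concat with rfl | ⟨u, i, rfl⟩
      · rcases w₂.eq_nil_or_concat with rfl | ⟨v, j, rfl⟩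
        · rfl
        · exact absurd heq.symm (notid _ (by simp))
      · rcases w₂.eq_nil_or_concat with rfl | ⟨v, j, rfl⟩
        · exact absurd heq (notid _ (by simp))
        · simp only [List.concat_eq_append] at heq hlen ⊢
          have hij : i = j := by
            rcases lt_trichotomy i j with h | h | h
            · exact absurd (claim i j u v h heq) id
            · exact h
            · exact absurd (claim j i v u h heq.symm) id
          subst hij
          have hcancel : F u = F v := by
            funext y
            have hsur : f i ((y - b i) / a i) = y := by
              have hne : a i ≠ 0 := (hapos i).ne'
              rw [hf]; field_simp; ring
            have h1 : F (u ++ [i]) ((y - b i) / a i) = F u y := by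
              rw [hFappend]
              simp only [Function.comp_apply]
              have : F [i] ((y - b i) / a i) = f i ((y - b i) / a i) := rfl
              rw [this, hsur]
            have h2 : F (v ++ [i]) ((y - b i) / a i) = F v y := by
              rw [hFappend]
              simp only [Function.comp_apply]
              have : F [i] ((y - b i) / a i) = f i ((y - b i) / a i) := rfl
              rw [this, hsur]
            rw [← h1, heq, h2]
          have huv : u = v := by
            apply ih u v _ hcancel
            simp only [List.length_append, List.length_singleton] at hlen ⊢
            omega
          rw [huv]
  intro heq
  exact main (w₁.length + w₂.length) w₁ w₂ le_rfl heq
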